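/- Let X be a Hilbert space, Ξ = ℓ²(Λ) for a countable set Λ, let E : X → Ξ and D : Ξ → X be weakly sequentially continuous maps, and let P : Ξ → [0,∞] be coercive (i.e., P(ξₙ) bounded implies ‖ξₙ‖ bounded). Then for any c > 0 the functional R(x) = P(E(x)) + (c/2)‖x − D(E(x))‖² is coercive on X, i.e., every sequence (xₙ) with R(xₙ) bounded is bounded in norm. -/

import Mathlib

open Filter Topology ENNReal
open scoped InnerProductSpace

/-- Weak convergence of a sequence in an inner product space. -/
def WeakConv {X : Type*} [NormedAddCommGroup X] [InnerProductSpace ℝ X]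
    (x : ℕ → X) (x0 : X) : Prop :=
  ∀ y : X, Tendsto (fun n => ⟪x n, y⟫_ℝ) atTop (nhds ⟪x0, y⟫_ℝ)

/-- A weakly convergent sequence in a real Hilbert space is norm-bounded
(Banach–Steinhaus). -/
lemma weakConv_norm_bounded {X : Type*} [NormedAddCommGroup X] [InnerProductSpace ℝ X]
    [CompleteSpace X] (x : ℕ → X) (x0 : X) (h : WeakConv x x0) :
    ∃ C : ℝ, ∀ n, ‖x n‖ ≤ C := by
  have hpt : ∀ y : X, ∃ C : ℝ, ∀ n, ‖(innerSL ℝ (x n)) y‖ ≤ C := by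
    intro y
    obtain ⟨C, hC⟩ := ((h y).norm).bddAbove_range
    exact ⟨C, fun n => hC ⟨n, rfl⟩⟩
  obtain ⟨C, hC⟩ := banach_steinhaus hpt
  exact ⟨C, fun n => by simpa [innerSL_apply_norm] using hC n⟩

/-- Every norm-bounded sequence in `ℓ²(Λ)` (with `Λ` countable) has a weakly
convergent subsequence. -/
lemma exists_weak_subseq {Λ : Type*} [Countable Λ]
    (ξ : ℕ → lp (fun _ : Λ => ℝ) 2) (C : ℝ) (hC : ∀ n, ‖ξ n‖ ≤ C) :
    ∃ φ : ℕ → ℕ, StrictMono φ ∧ ∃ ξ0 : lp (fun _ : Λ => ℝ) 2,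
      WeakConv (fun k => ξ (φ k)) ξ0 := by
  classical
  have hC0 : 0 ≤ C := le_trans (norm_nonneg _) (hC 0)
  have rpow2 : ∀ t : ℝ, t ^ (2 : ℝ≥0∞).toReal = t ^ (2 : ℕ) := by
    intro t
    rw [show ((2 : ℝ≥0∞).toReal) = ((2 : ℕ) : ℝ) by norm_num, Real.rpow_natCast]
  -- uniform coordinatewise bounds
  have hcoord : ∀ n (i : Λ), ξ n i ∈ Set.Icc (-C) C := by
    intro n i
    have h1 : ‖ξ n i‖ ≤ ‖ξ n‖ := lp.norm_apply_le_norm two_ne_zero (ξ n) i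
    have : |ξ n i| ≤ C := by
      rw [← Real.norm_eq_abs]; exact h1.trans (hC n)
    exact abs_le.mp this
  -- extract a pointwise convergent subsequence via compactness of a product of intervals
  have hK : IsCompact (Set.univ.pi fun _ : Λ => Set.Icc (-C) C) :=
    isCompact_univ_pi fun _ => isCompact_Icc
  have hmem : ∀ n, (fun i => ξ n i) ∈ Set.univ.pi fun _ : Λ => Set.Icc (-C) C := by
    intro n; exact fun i _ => hcoord n i
  obtain ⟨g, -, φ, hφ, hconv⟩ := hK.tendsto_subseq hmem
  have hpt : ∀ i : Λ, Tendsto (fun k => ξ (φ k) i) atTop (nhds (g i)) := by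
    intro i
    exact (tendsto_pi_nhds.mp hconv i)
  -- the pointwise limit is in ℓ²
  have sum_sq_le : ∀ n (s : Finset Λ), ∑ i ∈ s, ξ n i ^ 2 ≤ C ^ 2 := by
    intro n s
    have h1 := lp.sum_rpow_le_norm_rpow (p := 2) (by norm_num) (ξ n) s
    have h2 : ‖ξ n‖ ^ (2 : ℝ≥0∞).toReal ≤ C ^ (2 : ℝ≥0∞).toReal := by
      rw [show ((2 : ℝ≥0∞).toReal) = (2 : ℝ) by norm_num]
      exact Real.rpow_le_rpow (norm_nonneg _) (hC n) (by norm_num)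
    have h3 := h1.trans h2
    simpa [rpow2, Real.norm_eq_abs, sq_abs] using h3
  have hg : Memℓp g 2 := by
    apply memℓp_gen' (C := C ^ 2)
    intro s
    have hlim : Tendsto (fun k => ∑ i ∈ s, ξ (φ k) i ^ 2) atTop
        (nhds (∑ i ∈ s, g i ^ 2)) :=
      tendsto_finset_sum _ fun i _ => (hpt i).pow 2
    have hle : ∑ i ∈ s, g i ^ 2 ≤ C ^ 2 :=
      le_of_tendsto hlim (Eventually.of_forall fun k => sum_sq_le (φ k) s)
    calc ∑ i ∈ s, ‖g i‖ ^ (2 : ℝ≥0∞).toReal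
        = ∑ i ∈ s, g i ^ 2 := by
          refine Finset.sum_congr rfl fun i _ => ?_
          rw [rpow2, Real.norm_eq_abs, sq_abs]
      _ ≤ C ^ 2 := hle
  set ξ0 : lp (fun _ : Λ => ℝ) 2 := ⟨g, hg⟩ with hξ0
  refine ⟨φ, hφ, ξ0, ?_⟩
  -- weak convergence against every y ∈ ℓ²
  intro y
  have hy : HasSum (fun i : Λ => lp.single 2 i (y i)) y :=
    lp.hasSum_single (by norm_num) y
  -- convergence against finitely supported truncations
  have hfin : ∀ s : Finset Λ,
      Tendsto (fun k => ⟪ξ (φ k), ∑ i ∈ s, lp.single 2 i (y i)⟫_ℝ) atTop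
        (nhds ⟪ξ0, ∑ i ∈ s, lp.single 2 i (y i)⟫_ℝ) := by
    intro s
    have hrw : ∀ f : lp (fun _ : Λ => ℝ) 2,
        ⟪f, ∑ i ∈ s, lp.single 2 i (y i)⟫_ℝ = ∑ i ∈ s, f i * y i := by
      intro f
      rw [inner_sum]
      refine Finset.sum_congr rfl fun i _ => ?_
      rw [lp.inner_single_right]
      simp [RCLike.inner_apply]
      ring
    simp only [hrw]
    exact tendsto_finset_sum _ fun i _ => (hpt i).mul tendsto_const_nhds
  -- ε/2 argument
  rw [Metric.tendsto_atTop]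
  intro ε hε
  set B : ℝ := C + ‖ξ0‖ + 1 with hBdef
  have hBpos : 0 < B := by positivity
  have hδ : 0 < ε / (2 * B) := by positivity
  obtain ⟨s, hs⟩ := Metric.tendsto_atTop.mp hy (ε / (2 * B)) hδ
  have hys : ‖y - ∑ i ∈ s, lp.single 2 i (y i)‖ < ε / (2 * B) := by
    have := hs s le_rfl
    rw [dist_eq_norm] at this
    rw [← norm_neg]
    simpa [neg_sub] using this
  obtain ⟨N, hN⟩ := Metric.tendsto_atTop.mp (hfin s) (ε / 2) (by positivity)
  refine ⟨N, fun k hk => ?_⟩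
  set ys : lp (fun _ : Λ => ℝ) 2 := ∑ i ∈ s, lp.single 2 i (y i) with hysdef
  have hkey : ⟪ξ (φ k), y⟫_ℝ - ⟪ξ0, y⟫_ℝ =
      (⟪ξ (φ k), ys⟫_ℝ - ⟪ξ0, ys⟫_ℝ) + ⟪ξ (φ k) - ξ0, y - ys⟫_ℝ := by
    simp only [inner_sub_left, inner_sub_right]
    ring
  have hterm2 : |⟪ξ (φ k) - ξ0, y - ys⟫_ℝ| ≤ ε / 2 := by
    have h1 : |⟪ξ (φ k) - ξ0, y - ys⟫_ℝ| ≤ ‖ξ (φ k) - ξ0‖ * ‖y - ys‖ :=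
      abs_real_inner_le_norm _ _
    have h2 : ‖ξ (φ k) - ξ0‖ ≤ B := by
      calc ‖ξ (φ k) - ξ0‖ ≤ ‖ξ (φ k)‖ + ‖ξ0‖ := norm_sub_le _ _
        _ ≤ C + ‖ξ0‖ + 1 := by linarith [hC (φ k)]
    have h3 : ‖ξ (φ k) - ξ0‖ * ‖y - ys‖ ≤ B * (ε / (2 * B)) :=
      mul_le_mul h2 hys.le (norm_nonneg _) hBpos.le
    have h4 : B * (ε / (2 * B)) = ε / 2 := by
      field_simp
    linarith [h1.trans h3, h4 ▸ h3]
  have hterm1 : |⟪ξ (φ k), ys⟫_ℝ - ⟪ξ0, ys⟫_ℝ| < ε / 2 := by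
    have := hN k hk
    rwa [Real.dist_eq] at this
  rw [Real.dist_eq, hkey]
  calc |(⟪ξ (φ k), ys⟫_ℝ - ⟪ξ0, ys⟫_ℝ) + ⟪ξ (φ k) - ξ0, y - ys⟫_ℝ|
      ≤ |⟪ξ (φ k), ys⟫_ℝ - ⟪ξ0, ys⟫_ℝ| + |⟪ξ (φ k) - ξ0, y - ys⟫_ℝ| := abs_add_le _ _
    _ < ε / 2 + ε / 2 := by linarith
    _ = ε := by ring

theorem anett_regularizer_coercive
    {Λ : Type*} [Countable Λ]
    {X : Type*} [NormedAddCommGroup X] [InnerProductSpace ℝ X] [CompleteSpace X]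
    (E : X → lp (fun _ : Λ => ℝ) 2) (D : lp (fun _ : Λ => ℝ) 2 → X)
    (hE : ∀ (x : ℕ → X) (x0 : X), WeakConv x x0 → WeakConv (fun n => E (x n)) (E x0))
    (hD : ∀ (ξ : ℕ → lp (fun _ : Λ => ℝ) 2) (ξ0 : lp (fun _ : Λ => ℝ) 2),
      WeakConv ξ ξ0 → WeakConv (fun n => D (ξ n)) (D ξ0))
    (P : lp (fun _ : Λ => ℝ) 2 → ℝ≥0∞)
    (hP : ∀ ξ : ℕ → lp (fun _ : Λ => ℝ) 2,
      (∃ M : ℝ≥0∞, M ≠ ⊤ ∧ ∀ n, P (ξ n) ≤ M) → ∃ C : ℝ, ∀ n, ‖ξ n‖ ≤ C)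
    (c : ℝ) (hc : 0 < c) :
    ∀ x : ℕ → X,
      (∃ M : ℝ≥0∞, M ≠ ⊤ ∧ ∀ n,
        P (E (x n)) + ENNReal.ofReal ((c / 2) * ‖x n - D (E (x n))‖ ^ 2) ≤ M) →
      ∃ C : ℝ, ∀ n, ‖x n‖ ≤ C := by
  rintro x ⟨M, hMtop, hM⟩
  -- the penalty values are bounded, hence the codes E (x n) are bounded
  obtain ⟨C₁, hC₁⟩ := hP (fun n => E (x n))
    ⟨M, hMtop, fun n => le_trans le_self_add (hM n)⟩
  -- the residuals are bounded
  have hres : ∀ n, ‖x n - D (E (x n))‖ ≤ Real.sqrt (2 * M.toReal / c) := by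
    intro n
    have h1 : ENNReal.ofReal ((c / 2) * ‖x n - D (E (x n))‖ ^ 2) ≤ M :=
      le_trans le_add_self (hM n)
    have h2 : (c / 2) * ‖x n - D (E (x n))‖ ^ 2 ≤ M.toReal :=
      (ENNReal.ofReal_le_iff_le_toReal hMtop).mp h1
    have h3 : ‖x n - D (E (x n))‖ ^ 2 ≤ 2 * M.toReal / c := by
      rw [le_div_iff₀ hc]
      nlinarith
    calc ‖x n - D (E (x n))‖ = Real.sqrt (‖x n - D (E (x n))‖ ^ 2) :=
          (Real.sqrt_sq (norm_nonneg _)).symm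
      _ ≤ Real.sqrt (2 * M.toReal / c) := Real.sqrt_le_sqrt h3
  set C₂ : ℝ := Real.sqrt (2 * M.toReal / c)
  -- argue by contradiction
  by_contra hcon
  push_neg at hcon
  choose ψ hψ using fun k : ℕ => hcon k
  -- extract a weakly convergent subsequence of the codes
  obtain ⟨φ, hφ, ξ0, hw⟩ := exists_weak_subseq (fun k => E (x (ψ k))) C₁
    (fun k => hC₁ (ψ k))
  -- the decoded points along the subsequence are bounded
  obtain ⟨C₃, hC₃⟩ := weakConv_norm_bounded (fun j => D (E (x (ψ (φ j))))) (D ξ0)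
    (hD _ _ hw)
  -- derive the contradiction
  obtain ⟨k, hk⟩ := exists_nat_gt (C₂ + C₃)
  have h1 : (k : ℝ) ≤ (φ k : ℝ) := by exact_mod_cast hφ.le_apply
  have h2 : (φ k : ℝ) < ‖x (ψ (φ k))‖ := hψ (φ k)
  have h3 : ‖x (ψ (φ k))‖ ≤ C₂ + C₃ := by
    have := norm_add_le (x (ψ (φ k)) - D (E (x (ψ (φ k))))) (D (E (x (ψ (φ k)))))
    rw [sub_add_cancel] at this
    exact this.trans (add_le_add (hres (ψ (φ k))) (hC₃ k))
  linarith
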